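/- Let m be a positive integer and let b(x) = (sin(mx/2)/sin(x/2))^4. Let f : ℝ → ℝ be 2π-periodic and Lipschitz continuous with Lipschitz constant λ. Define f̃(x) = (∫_{−π}^{π} b(u) f(x − u) du) / (∫_{−π}^{π} b(u) du). Then for every x ∈ ℝ, |f̃(x) − f(x)| ≤ 9λ/m. -/

import Mathlib

open MeasureTheory

/-- The Jackson kernel of parameter `m`: `b(x) = (sin(mx/2)/sin(x/2))^4`.
(At multiples of `2π` this formula gives the junk value `0`, but the kernel only
appears inside integrals, which are unaffected by this measure-zero set.) -/
noncomputable def jacksonKernel (m : ℕ) (x : ℝ) : ℝ :=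
  (Real.sin (m * x / 2) / Real.sin (x / 2)) ^ 4

namespace JacksonAux

open Real intervalIntegral

lemma abs_sin_nat_mul_le (n : ℕ) (x : ℝ) : |Real.sin (n * x)| ≤ n * |Real.sin x| := by
  induction n with
  | zero => simp
  | succ k ih =>
    have hk : ((k + 1 : ℕ) : ℝ) * x = k * x + x := by push_cast; ring
    rw [hk, Real.sin_add]
    calc |Real.sin (k * x) * Real.cos x + Real.cos (k * x) * Real.sin x|
        ≤ |Real.sin (k * x) * Real.cos x| + |Real.cos (k * x) * Real.sin x| := abs_add_le _ _
      _ ≤ |Real.sin (k * x)| * 1 + 1 * |Real.sin x| := by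
          rw [abs_mul, abs_mul]
          gcongr
          · exact Real.abs_cos_le_one x
          · exact Real.abs_cos_le_one _
      _ ≤ (k : ℝ) * |Real.sin x| + 1 * |Real.sin x| := by
          rw [mul_one]
          gcongr
      _ = ((k + 1 : ℕ) : ℝ) * |Real.sin x| := by push_cast; ring

lemma kernel_nonneg (m : ℕ) (u : ℝ) : 0 ≤ jacksonKernel m u := by
  unfold jacksonKernel; positivity

lemma kernel_even (m : ℕ) (u : ℝ) : jacksonKernel m (-u) = jacksonKernel m u := by
  unfold jacksonKernel
  rw [show (m : ℝ) * (-u) / 2 = -((m : ℝ) * u / 2) by ring,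
    show (-u) / 2 = -(u / 2) by ring, Real.sin_neg, Real.sin_neg, neg_div_neg_eq]

lemma kernel_le (m : ℕ) (u : ℝ) : jacksonKernel m u ≤ (m : ℝ) ^ 4 := by
  unfold jacksonKernel
  rcases eq_or_ne (Real.sin (u / 2)) 0 with h | h
  · rw [h, div_zero, zero_pow (by norm_num : 4 ≠ 0)]
    positivity
  · have h1 : |Real.sin ((m : ℝ) * u / 2)| ≤ (m : ℝ) * |Real.sin (u / 2)| := by
      have := abs_sin_nat_mul_le m (u / 2)
      rwa [show (m : ℝ) * (u / 2) = (m : ℝ) * u / 2 by ring] at this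
    have h2 : |Real.sin ((m : ℝ) * u / 2) / Real.sin (u / 2)| ≤ (m : ℝ) := by
      rw [abs_div, div_le_iff₀ (abs_pos.2 h)]
      exact h1
    calc (Real.sin ((m : ℝ) * u / 2) / Real.sin (u / 2)) ^ 4
        = |Real.sin ((m : ℝ) * u / 2) / Real.sin (u / 2)| ^ 4 := by
          rw [← abs_pow, abs_of_nonneg (by positivity)]
      _ ≤ (m : ℝ) ^ 4 := pow_le_pow_left₀ (abs_nonneg _) h2 4

lemma kernel_le_div (m : ℕ) (u : ℝ) (hu : |u| ≤ Real.pi) (h0 : u ≠ 0) :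
    jacksonKernel m u ≤ Real.pi ^ 4 / u ^ 4 := by
  unfold jacksonKernel
  have hden : |u| / Real.pi ≤ |Real.sin (u / 2)| := by
    have h1 : |u / 2| ≤ Real.pi / 2 := by
      rw [abs_div, abs_of_pos (by norm_num : (0:ℝ) < 2)]
      linarith
    have := Real.mul_abs_le_abs_sin h1
    rw [abs_div, abs_of_pos (by norm_num : (0:ℝ) < 2)] at this
    have hpi := Real.pi_pos
    calc |u| / Real.pi = 2 / Real.pi * (|u| / 2) := by field_simp
      _ ≤ |Real.sin (u / 2)| := this
  have hu0 : 0 < |u| := abs_pos.2 h0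
  have hpi := Real.pi_pos
  have hdenpos : 0 < |Real.sin (u / 2)| := lt_of_lt_of_le (by positivity) hden
  have h2 : |Real.sin ((m : ℝ) * u / 2) / Real.sin (u / 2)| ≤ Real.pi / |u| := by
    rw [abs_div, div_le_div_iff₀ (abs_pos.2 (fun h => by simp [h] at hdenpos)) hu0]
    calc |Real.sin ((m : ℝ) * u / 2)| * |u| ≤ 1 * |u| := by
          gcongr; exact Real.abs_sin_le_one _
      _ = |u| := one_mul _
      _ ≤ Real.pi * |Real.sin (u / 2)| := by
          have := (div_le_iff₀ hpi).1 hden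
          linarith

  calc (Real.sin ((m : ℝ) * u / 2) / Real.sin (u / 2)) ^ 4
      = |Real.sin ((m : ℝ) * u / 2) / Real.sin (u / 2)| ^ 4 := by
        rw [← abs_pow, abs_of_nonneg (by positivity)]
    _ ≤ (Real.pi / |u|) ^ 4 := pow_le_pow_left₀ (abs_nonneg _) h2 4
    _ = Real.pi ^ 4 / u ^ 4 := by
        rw [div_pow, ← abs_pow, abs_of_nonneg (by positivity : (0:ℝ) ≤ u ^ 4)]

lemma kernel_ge_aux (m : ℕ) (hm : 0 < m) (u : ℝ) (hu : 0 < u) (h2 : (m : ℝ) * u ≤ 2) :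
    (m : ℝ) ^ 4 - (m : ℝ) ^ 6 / 4 * u ^ 2 ≤ jacksonKernel m u := by
  have hm1 : (1 : ℝ) ≤ m := by exact_mod_cast hm
  set t : ℝ := (m : ℝ) * u / 2 with ht
  have ht0 : 0 < t := by positivity
  have ht1 : t ≤ 1 := by rw [ht]; linarith
  have hsin_t : t - t ^ 3 / 4 < Real.sin t := by
    have := Real.sin_gt_sub_cube ht0
    nlinarith [pow_pos ht0 3]
  have hnum : 0 ≤ t - t ^ 3 / 4 := by
    nlinarith [mul_nonneg (mul_nonneg ht0.le (sub_nonneg.2 ht1)) (by linarith : (0:ℝ) ≤ 1 + t)]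
  have hu2 : u ≤ 2 := by nlinarith
  have hupi : u / 2 < Real.pi := by linarith [Real.pi_gt_three]
  have hden_pos : 0 < Real.sin (u / 2) :=
    Real.sin_pos_of_pos_of_lt_pi (by positivity) hupi
  have hden_le : Real.sin (u / 2) ≤ u / 2 := le_of_lt (Real.sin_lt (by positivity))
  have hratio : (t - t ^ 3 / 4) / (u / 2) ≤ Real.sin t / Real.sin (u / 2) :=
    div_le_div₀ (le_of_lt (lt_of_le_of_lt hnum hsin_t)) (le_of_lt hsin_t) hden_pos hden_le
  have hr_eq : (t - t ^ 3 / 4) / (u / 2) = (m : ℝ) * (1 - (m : ℝ) ^ 2 * u ^ 2 / 16) := by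
    rw [ht]; field_simp; ring
  have hmu0 : 0 < (m : ℝ) * u := by positivity
  have hmusq : (m : ℝ) * u * ((m : ℝ) * u) ≤ 2 * ((m : ℝ) * u) :=
    mul_le_mul_of_nonneg_right h2 hmu0.le
  have hr_nonneg : 0 ≤ (m : ℝ) * (1 - (m : ℝ) ^ 2 * u ^ 2 / 16) := by nlinarith
  have hpow : ((m : ℝ) * (1 - (m : ℝ) ^ 2 * u ^ 2 / 16)) ^ 4
      ≤ (Real.sin t / Real.sin (u / 2)) ^ 4 := by
    apply pow_le_pow_left₀ hr_nonneg
    rw [← hr_eq]; exact hratio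
  have hpoly : (m : ℝ) ^ 4 - (m : ℝ) ^ 6 / 4 * u ^ 2
      ≤ ((m : ℝ) * (1 - (m : ℝ) ^ 2 * u ^ 2 / 16)) ^ 4 := by
    set s : ℝ := (m : ℝ) ^ 2 * u ^ 2 / 16 with hs_def
    have hs : 0 ≤ s := by positivity
    have h6 : 0 ≤ s ^ 2 * (s ^ 2 - 4 * s + 6) :=
      mul_nonneg (sq_nonneg s) (by nlinarith [sq_nonneg (s - 2)])
    have key : 1 - 4 * s ≤ (1 - s) ^ 4 := by nlinarith [h6]
    have key2 : (m : ℝ) ^ 4 * (1 - 4 * s) ≤ (m : ℝ) ^ 4 * (1 - s) ^ 4 :=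
      mul_le_mul_of_nonneg_left key (by positivity)
    calc (m : ℝ) ^ 4 - (m : ℝ) ^ 6 / 4 * u ^ 2 = (m : ℝ) ^ 4 * (1 - 4 * s) := by
          rw [hs_def]; ring
      _ ≤ (m : ℝ) ^ 4 * (1 - s) ^ 4 := key2
      _ = ((m : ℝ) * (1 - s)) ^ 4 := by ring
  unfold jacksonKernel
  calc (m : ℝ) ^ 4 - (m : ℝ) ^ 6 / 4 * u ^ 2
      ≤ ((m : ℝ) * (1 - (m : ℝ) ^ 2 * u ^ 2 / 16)) ^ 4 := hpoly
    _ ≤ (Real.sin t / Real.sin (u / 2)) ^ 4 := hpow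

lemma kernel_ge (m : ℕ) (hm : 0 < m) (u : ℝ) (h0 : u ≠ 0) :
    (m : ℝ) ^ 4 - (m : ℝ) ^ 6 / 4 * u ^ 2 ≤ jacksonKernel m u := by
  rcases le_or_gt ((m : ℝ) * |u|) 2 with h | h
  · rcases h0.lt_or_gt with hneg | hpos
    · have := kernel_ge_aux m hm (-u) (by linarith) (by rwa [abs_of_neg hneg] at h)
      rwa [kernel_even, neg_pow, show ((-1:ℝ))^2 = 1 by norm_num, one_mul] at this
    · exact kernel_ge_aux m hm u hpos (by rwa [abs_of_pos hpos] at h)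
  · have : (m : ℝ) ^ 4 - (m : ℝ) ^ 6 / 4 * u ^ 2 ≤ 0 := by
      have hm0 : (1:ℝ) ≤ (m:ℝ) := by exact_mod_cast hm
      have h2 : 4 < ((m : ℝ) * |u|) ^ 2 := by nlinarith [abs_nonneg u]
      have : (m : ℝ)^2 * u^2 > 4 := by
        rw [mul_pow, sq_abs] at h2; linarith
      nlinarith [pow_pos (show (0:ℝ) < m by positivity) 4, sq_nonneg ((m:ℝ))]
    linarith [kernel_nonneg m u]

lemma kernel_measurable (m : ℕ) : Measurable (jacksonKernel m) := by
  unfold jacksonKernel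
  fun_prop

lemma kernel_mul_integrable (m : ℕ) (g : ℝ → ℝ) (hg : Continuous g) (a b : ℝ) :
    IntervalIntegrable (fun u => jacksonKernel m u * g u) volume a b := by
  have hbound : IntervalIntegrable (fun u => (m : ℝ) ^ 4 * |g u|) volume a b :=
    (Continuous.intervalIntegrable (by continuity) a b)
  rw [intervalIntegrable_iff] at hbound ⊢
  refine hbound.mono' (((kernel_measurable m).mul hg.measurable).aestronglyMeasurable) ?_
  refine ae_of_all _ fun u => ?_
  have := kernel_nonneg m u
  have := kernel_le m u
  rw [Real.norm_eq_abs, abs_mul, abs_of_nonneg (kernel_nonneg m u)]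
  gcongr

lemma kernel_integrable (m : ℕ) (a b : ℝ) :
    IntervalIntegrable (jacksonKernel m) volume a b := by
  simpa using kernel_mul_integrable m (fun _ => (1:ℝ)) continuous_const a b

end JacksonAux

set_option maxHeartbeats 1000000 in
/-- **Jackson's theorem for trigonometric polynomials.**  If `f : ℝ → ℝ` is
`2π`-periodic and Lipschitz with constant `λ`, then the convolution
`f̃(x) = (∫_{-π}^{π} b(u) f(x-u) du) / (∫_{-π}^{π} b(u) du)` with the Jackson kernel `b`
of parameter `m` satisfies `|f̃(x) - f(x)| ≤ 9λ/m` for all `x`. -/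
theorem jackson_kernel_uniform_bound (m : ℕ) (hm : 0 < m) (f : ℝ → ℝ) (lam : ℝ)
    (hper : ∀ x : ℝ, f (x + 2 * Real.pi) = f x)
    (hlip : ∀ x y : ℝ, |f x - f y| ≤ lam * |x - y|) :
    ∀ x : ℝ,
      |(∫ u in (-Real.pi)..Real.pi, jacksonKernel m u * f (x - u)) /
          (∫ u in (-Real.pi)..Real.pi, jacksonKernel m u) - f x| ≤ 9 * lam / m := by
  intro x
  have hpi := Real.pi_pos
  have hpi3 := Real.pi_gt_three
  have hm1 : (1:ℝ) ≤ m := by exact_mod_cast hm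
  have hmR : (0:ℝ) < m := by positivity
  have hlam : 0 ≤ lam := by
    have h := hlip 1 0
    norm_num at h
    linarith [abs_nonneg (f 1 - f 0)]
  have hf : Continuous f := by
    have hlw : LipschitzWith (Real.toNNReal lam) f := by
      apply LipschitzWith.of_dist_le_mul
      intro a b
      rw [Real.dist_eq, Real.dist_eq, Real.coe_toNNReal']
      calc |f a - f b| ≤ lam * |a - b| := hlip a b
        _ ≤ max lam 0 * |a - b| := by gcongr; exact le_max_left _ _
    exact hlw.continuous
  set B := ∫ u in (-Real.pi)..Real.pi, jacksonKernel m u with hB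
  set N := ∫ u in (-Real.pi)..Real.pi, jacksonKernel m u * f (x - u) with hN
  set c2 : ℝ := 2 / m with hc2
  have hc2pos : 0 < c2 := by positivity
  have hc2le : c2 ≤ Real.pi := by
    have : c2 ≤ 2 := by
      rw [hc2, div_le_iff₀ hmR]; nlinarith
    linarith
  -- lower bound on B
  have hpoly_int : (∫ u in (-c2)..c2, ((m:ℝ)^4 - (m:ℝ)^6/4 * u^2))
      = 8 * (m:ℝ)^3 / 3 := by
    rw [intervalIntegral.integral_sub intervalIntegrable_const
      ((by fun_prop : Continuous fun u : ℝ => (m:ℝ)^6/4 * u^2).intervalIntegrable _ _),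
      intervalIntegral.integral_const, intervalIntegral.integral_const_mul,
      integral_pow]
    rw [hc2]
    have hmne : (m:ℝ) ≠ 0 := ne_of_gt hmR
    field_simp
    simp only [smul_eq_mul]
    push_cast
    have hmi : (m:ℝ) * (m:ℝ)⁻¹ = 1 := mul_inv_cancel₀ hmne
    linear_combination (144 * (m:ℝ)^3 - 48 * (m:ℝ)^3 * (((m:ℝ) * (m:ℝ)⁻¹)^2 + (m:ℝ) * (m:ℝ)⁻¹ + 1)) * hmi
  have h0ae : ∀ᵐ (u : ℝ) ∂(volume : Measure ℝ), u ≠ 0 := by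
    rw [MeasureTheory.ae_iff]
    simp only [not_not, Set.setOf_eq_eq_singleton]
    exact Real.volume_singleton
  have hmono : (∫ u in (-c2)..c2, ((m:ℝ)^4 - (m:ℝ)^6/4 * u^2))
      ≤ ∫ u in (-c2)..c2, jacksonKernel m u := by
    refine intervalIntegral.integral_mono_ae (by linarith)
      (intervalIntegrable_const.sub ((continuous_const.mul (continuous_pow 2)).intervalIntegrable _ _))
      (JacksonAux.kernel_integrable m _ _) ?_
    exact h0ae.mono fun u hu => JacksonAux.kernel_ge m hm u hu
  have hsplit1 := intervalIntegral.integral_add_adjacent_intervals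
    (JacksonAux.kernel_integrable m (-Real.pi) (-c2)) (JacksonAux.kernel_integrable m (-c2) Real.pi)
  have hsplit2 := intervalIntegral.integral_add_adjacent_intervals
    (JacksonAux.kernel_integrable m (-c2) c2) (JacksonAux.kernel_integrable m c2 Real.pi)
  have hpos1 : 0 ≤ ∫ u in (-Real.pi)..(-c2), jacksonKernel m u :=
    intervalIntegral.integral_nonneg (by linarith) (fun u _ => JacksonAux.kernel_nonneg m u)
  have hpos3 : 0 ≤ ∫ u in c2..Real.pi, jacksonKernel m u :=
    intervalIntegral.integral_nonneg (by linarith) (fun u _ => JacksonAux.kernel_nonneg m u)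
  have hBlow : 8 * (m:ℝ)^3 / 3 ≤ B := by
    rw [hB, ← hsplit1, ← hsplit2]
    linarith [hpoly_int ▸ hmono]
  have hBpos : 0 < B := lt_of_lt_of_le (by positivity) hBlow
  -- upper bound on ∫ k(u)|u|
  set c : ℝ := Real.pi / m with hc
  have hcpos : 0 < c := by positivity
  have hcle : c ≤ Real.pi := by
    rw [hc, div_le_iff₀ hmR]; nlinarith
  have habs_int : ∀ a b : ℝ, IntervalIntegrable (fun u => jacksonKernel m u * |u|) volume a b :=
    fun a b => JacksonAux.kernel_mul_integrable m _ continuous_abs a b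
  have habsval : (∫ u in (-c)..c, |u|) = c^2 := by
    rw [← intervalIntegral.integral_add_adjacent_intervals (b := 0)
      (continuous_abs.intervalIntegrable _ _) (continuous_abs.intervalIntegrable _ _)]
    have l : (∫ u in (-c)..(0:ℝ), |u|) = ∫ u in (-c)..(0:ℝ), -u := by
      refine intervalIntegral.integral_congr fun u hu => ?_
      rw [Set.uIcc_of_le (by linarith)] at hu
      exact abs_of_nonpos hu.2
    have r : (∫ u in (0:ℝ)..c, |u|) = ∫ u in (0:ℝ)..c, u := by
      refine intervalIntegral.integral_congr fun u hu => ?_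
      rw [Set.uIcc_of_le (by linarith)] at hu
      exact abs_of_nonneg hu.1
    rw [l, r, intervalIntegral.integral_neg, integral_id, integral_id]
    ring
  have hmid : (∫ u in (-c)..c, jacksonKernel m u * |u|) ≤ Real.pi^2 * m^2 := by
    have step : (∫ u in (-c)..c, jacksonKernel m u * |u|)
        ≤ ∫ u in (-c)..c, (m:ℝ)^4 * |u| := by
      refine intervalIntegral.integral_mono_on (by linarith) (habs_int _ _)
        ((continuous_const.mul continuous_abs).intervalIntegrable _ _) fun u _ => ?_
      exact mul_le_mul_of_nonneg_right (JacksonAux.kernel_le m u) (abs_nonneg u)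
    rw [intervalIntegral.integral_const_mul, habsval] at step
    have : (m:ℝ)^4 * c^2 = Real.pi^2 * m^2 := by
      rw [hc]; field_simp
    linarith
  have hright : (∫ u in c..Real.pi, jacksonKernel m u * |u|) ≤ Real.pi^2 * m^2 / 2 := by
    have h0mem : (0:ℝ) ∉ Set.uIcc c Real.pi := by
      rw [Set.uIcc_of_le (by linarith)]
      intro h
      exact absurd h.1 (by linarith)
    have hbnd_int : IntervalIntegrable (fun u : ℝ => Real.pi^4 * u ^ (-3 : ℤ)) volume c Real.pi :=
      (intervalIntegral.intervalIntegrable_zpow (Or.inr h0mem)).const_mul _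
    have step : (∫ u in c..Real.pi, jacksonKernel m u * |u|)
        ≤ ∫ u in c..Real.pi, Real.pi^4 * u ^ (-3 : ℤ) := by
      refine intervalIntegral.integral_mono_on (by linarith) (habs_int _ _) hbnd_int
        fun u hu => ?_
      have hu0 : 0 < u := lt_of_lt_of_le hcpos hu.1
      have hupi : |u| ≤ Real.pi := by rw [abs_of_pos hu0]; exact hu.2
      have hk := JacksonAux.kernel_le_div m u hupi (ne_of_gt hu0)
      have hz : u ^ (-3 : ℤ) = 1 / u^3 := by
        rw [zpow_neg, one_div, ← zpow_natCast u 3]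
        norm_num
      rw [abs_of_pos hu0, hz]
      calc jacksonKernel m u * u ≤ Real.pi^4 / u^4 * u :=
            mul_le_mul_of_nonneg_right hk hu0.le
        _ = Real.pi^4 * (1 / u^3) := by
              field_simp
    have hval : (∫ u in c..Real.pi, Real.pi^4 * u ^ (-3 : ℤ))
        = Real.pi^2 * (m^2 - 1) / 2 := by
      rw [intervalIntegral.integral_const_mul,
        integral_zpow (Or.inr ⟨by norm_num, h0mem⟩)]
      have hcne : c ≠ 0 := ne_of_gt hcpos
      have hpine : Real.pi ≠ 0 := ne_of_gt hpi
      have e : ∀ v : ℝ, v ^ ((-3:ℤ)+1) = (v^2)⁻¹ := fun v => by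
        rw [show ((-3:ℤ)+1) = -2 by norm_num, zpow_neg, ← zpow_natCast v 2]
        norm_num
      rw [e, e, hc]
      push_cast
      field_simp
      ring
    rw [hval] at step
    nlinarith
  have hleft : (∫ u in (-Real.pi)..(-c), jacksonKernel m u * |u|)
      = ∫ u in c..Real.pi, jacksonKernel m u * |u| := by
    rw [show (∫ u in (-Real.pi)..(-c), jacksonKernel m u * |u|)
        = ∫ u in c..Real.pi, jacksonKernel m (-u) * |(-u)| from
      (intervalIntegral.integral_comp_neg fun u => jacksonKernel m u * |u|).symm]
    simp only [JacksonAux.kernel_even, abs_neg]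
  have hIup : (∫ u in (-Real.pi)..Real.pi, jacksonKernel m u * |u|) ≤ 2 * Real.pi^2 * m^2 := by
    rw [← intervalIntegral.integral_add_adjacent_intervals (b := -c)
        (habs_int _ _) (habs_int _ _),
      ← intervalIntegral.integral_add_adjacent_intervals (a := -c) (b := c)
        (habs_int _ _) (habs_int _ _)]
    rw [hleft]
    linarith
  -- key identity and estimate
  have hcont : Continuous fun u : ℝ => f (x - u) := hf.comp (continuous_const.sub continuous_id)
  have hint_fx : IntervalIntegrable (fun u => jacksonKernel m u * f (x - u)) volume
      (-Real.pi) Real.pi := JacksonAux.kernel_mul_integrable m _ hcont _ _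
  have hint_diff : IntervalIntegrable (fun u => jacksonKernel m u * (f (x - u) - f x)) volume
      (-Real.pi) Real.pi :=
    JacksonAux.kernel_mul_integrable m _ (hcont.sub continuous_const) _ _
  have hkey : N - f x * B = ∫ u in (-Real.pi)..Real.pi, jacksonKernel m u * (f (x - u) - f x) := by
    have heq : (fun u => jacksonKernel m u * (f (x - u) - f x))
        = fun u => jacksonKernel m u * f (x - u) - f x * jacksonKernel m u := by
      funext u; ring
    rw [heq, intervalIntegral.integral_sub hint_fx
      ((JacksonAux.kernel_integrable m _ _).const_mul (f x)),
      intervalIntegral.integral_const_mul]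
  have habs : |N - f x * B| ≤ lam * (2 * Real.pi^2 * m^2) := by
    rw [hkey]
    calc |∫ u in (-Real.pi)..Real.pi, jacksonKernel m u * (f (x - u) - f x)|
        ≤ ∫ u in (-Real.pi)..Real.pi, |jacksonKernel m u * (f (x - u) - f x)| :=
          intervalIntegral.abs_integral_le_integral_abs (by linarith)
      _ ≤ ∫ u in (-Real.pi)..Real.pi, lam * (jacksonKernel m u * |u|) := by
          refine intervalIntegral.integral_mono_on (by linarith) hint_diff.abs
            ((habs_int _ _).const_mul lam) fun u _ => ?_
          rw [abs_mul, abs_of_nonneg (JacksonAux.kernel_nonneg m u)]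
          have h1 : |f (x - u) - f x| ≤ lam * |u| := by
            have h := hlip (x - u) x
            rwa [show x - u - x = -u by ring, abs_neg] at h
          calc jacksonKernel m u * |f (x - u) - f x|
              ≤ jacksonKernel m u * (lam * |u|) :=
                mul_le_mul_of_nonneg_left h1 (JacksonAux.kernel_nonneg m u)
            _ = lam * (jacksonKernel m u * |u|) := by ring
      _ = lam * ∫ u in (-Real.pi)..Real.pi, jacksonKernel m u * |u| :=
          intervalIntegral.integral_const_mul _ _
      _ ≤ lam * (2 * Real.pi^2 * m^2) := mul_le_mul_of_nonneg_left hIup hlam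
  have hB0 : B ≠ 0 := ne_of_gt hBpos
  have hgoal_eq : N / B - f x = (N - f x * B) / B := by
    field_simp
  rw [hgoal_eq, abs_div, abs_of_pos hBpos, div_le_div_iff₀ hBpos hmR]
  have hpi2 : Real.pi^2 ≤ 12 := by nlinarith [Real.pi_lt_d2]
  have h1 : |N - f x * B| * m ≤ lam * (2 * Real.pi^2 * m^2) * m :=
    mul_le_mul_of_nonneg_right habs hmR.le
  have h2 : lam * (2 * Real.pi^2 * m^2) * m ≤ 24 * lam * (m:ℝ)^3 := by
    nlinarith [mul_nonneg hlam (pow_nonneg hmR.le 3)]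
  have h4 : 9 * lam * (8 * (m:ℝ)^3 / 3) ≤ 9 * lam * B :=
    mul_le_mul_of_nonneg_left hBlow (by positivity)
  nlinarith
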